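/- For every x in the probability simplex Δ^d, x·s(T) − ∫₀ᵀ p(t)·r(t) dt ≤ β⁻¹ ln d. In particular, the continuous-time regret of the follow-the-regularized-leader strategy p(t) is bounded by β⁻¹ ln d. -/

import Mathlib

open MeasureTheory intervalIntegral Real Finset Set Filter

/-- Continuous-time online linear optimization: for every `x` in the probability simplex,
`x ⬝ s(T) - ∫₀ᵀ p(t) ⬝ r(t) dt ≤ β⁻¹ ln d`, where `s(t) = ∫₀ᵗ r(z) dz` is the cumulative
reward and `p(t)` is the follow-the-regularized-leader (softmax) strategy. -/
theorem continuous_time_ftrl_regret_bound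
    (d : ℕ) (hd : 1 ≤ d) (T : ℝ) (hT : 0 < T) (β : ℝ) (hβ : 0 < β)
    (r : ℝ → Fin d → ℝ)
    (hr_int : ∀ a, IntervalIntegrable (fun t => r t a) MeasureTheory.volume 0 T)
    (hr_range : ∀ t ∈ Set.Icc (0 : ℝ) T, ∀ a, r t a ∈ Set.Icc (0 : ℝ) 1)
    (s : ℝ → Fin d → ℝ)
    (hs : ∀ t, ∀ a, s t a = ∫ z in (0 : ℝ)..t, r z a)
    (p : ℝ → Fin d → ℝ)
    (hp : ∀ t, ∀ a, p t a = Real.exp (β * s t a) / ∑ c, Real.exp (β * s t c))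
    (x : Fin d → ℝ) (hx : x ∈ stdSimplex ℝ (Fin d)) :
    (∑ a, x a * s T a) - (∫ t in (0 : ℝ)..T, ∑ a, p t a * r t a) ≤ β⁻¹ * Real.log d := by
  classical
  have hd0 : (0:ℝ) < d := by exact_mod_cast Nat.lt_of_lt_of_le Nat.zero_lt_one hd
  set S : ℝ → ℝ := fun t => ∑ c, Real.exp (β * s t c) with hSdef
  set f : ℝ → ℝ := fun t => ∑ a, p t a * r t a with hfdef
  have hne : (Finset.univ : Finset (Fin d)).Nonempty := by
    refine Finset.univ_nonempty_iff.2 ?_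
    exact Fin.pos_iff_nonempty.1 (Nat.lt_of_lt_of_le Nat.zero_lt_one hd)
  have hSpos : ∀ t, 0 < S t := fun t =>
    Finset.sum_pos (fun c _ => Real.exp_pos _) hne
  -- integrability of r on subintervals of [0, T]
  have hsub : ∀ a (t₁ t₂ : ℝ), t₁ ∈ Set.Icc (0:ℝ) T → t₂ ∈ Set.Icc (0:ℝ) T →
      IntervalIntegrable (fun t => r t a) volume t₁ t₂ := by
    intro a t₁ t₂ h1 h2
    refine (hr_int a).mono_set ?_
    rw [Set.uIcc_of_le hT.le]
    exact Set.uIcc_subset_Icc h1 h2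
  -- difference of cumulative rewards
  have hsdiff : ∀ a (t₁ t₂ : ℝ), t₁ ∈ Set.Icc (0:ℝ) T → t₂ ∈ Set.Icc (0:ℝ) T →
      s t₂ a - s t₁ a = ∫ t in t₁..t₂, r t a := by
    intro a t₁ t₂ h1 h2
    rw [hs, hs]
    exact intervalIntegral.integral_interval_sub_left
      (hsub a 0 t₂ (Set.left_mem_Icc.2 hT.le) h2)
      (hsub a 0 t₁ (Set.left_mem_Icc.2 hT.le) h1)
  -- bounds on increments of s
  have hsmono : ∀ a (t₁ t₂ : ℝ), t₁ ∈ Set.Icc (0:ℝ) T → t₂ ∈ Set.Icc (0:ℝ) T →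
      t₁ ≤ t₂ → s t₁ a ≤ s t₂ a := by
    intro a t₁ t₂ h1 h2 h12
    have : (0:ℝ) ≤ ∫ t in t₁..t₂, r t a := by
      refine intervalIntegral.integral_nonneg h12 ?_
      intro u hu
      exact (hr_range u ⟨le_trans h1.1 hu.1, le_trans hu.2 h2.2⟩ a).1
    linarith [hsdiff a t₁ t₂ h1 h2, this]
  have hslip : ∀ a (t₁ t₂ : ℝ), t₁ ∈ Set.Icc (0:ℝ) T → t₂ ∈ Set.Icc (0:ℝ) T →
      t₁ ≤ t₂ → s t₂ a ≤ s t₁ a + (t₂ - t₁) := by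
    intro a t₁ t₂ h1 h2 h12
    have hle : (∫ t in t₁..t₂, r t a) ≤ ∫ _ in t₁..t₂, (1:ℝ) := by
      refine intervalIntegral.integral_mono_on h12 (hsub a t₁ t₂ h1 h2)
        intervalIntegrable_const ?_
      intro u hu
      exact (hr_range u ⟨le_trans h1.1 hu.1, le_trans hu.2 h2.2⟩ a).2
    have h1int : (∫ _ in t₁..t₂, (1:ℝ)) = t₂ - t₁ := by simp
    linarith [hsdiff a t₁ t₂ h1 h2, hle, h1int ▸ hle]
  -- coordinates of p
  have hpsum : ∀ t, ∑ a, p t a = 1 := by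
    intro t
    have : ∑ a, p t a = (∑ a, Real.exp (β * s t a)) / S t := by
      rw [Finset.sum_div]; exact Finset.sum_congr rfl fun a _ => hp t a
    rw [this, hSdef, div_self (hSpos t).ne']
  have hp_nonneg : ∀ t a, 0 ≤ p t a := by
    intro t a; rw [hp]
    exact div_nonneg (Real.exp_pos _).le (hSpos t).le
  -- continuity of s and p on [0, T]
  have hscont : ∀ a, ContinuousOn (fun t => s t a) (Set.Icc (0:ℝ) T) := by
    intro a
    have h0 : (0:ℝ) ∈ Set.uIcc (0:ℝ) T := Set.left_mem_uIcc
    have := intervalIntegral.continuousOn_primitive_interval' (hr_int a) h0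
    rw [Set.uIcc_of_le hT.le] at this
    exact this.congr fun t _ => hs t a
  have hpcont : ∀ a, ContinuousOn (fun t => p t a) (Set.Icc (0:ℝ) T) := by
    intro a
    have hnum : ContinuousOn (fun t => Real.exp (β * s t a)) (Set.Icc (0:ℝ) T) :=
      Real.continuous_exp.comp_continuousOn ((continuousOn_const).mul (hscont a))
    have hden : ContinuousOn S (Set.Icc (0:ℝ) T) := by
      apply continuousOn_finset_sum
      intro c _
      exact Real.continuous_exp.comp_continuousOn ((continuousOn_const).mul (hscont c))
    have := hnum.div hden (fun t _ => (hSpos t).ne')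
    exact this.congr fun t _ => hp t a
  -- integrability of f on subintervals
  have hfint : ∀ (t₁ t₂ : ℝ), t₁ ∈ Set.Icc (0:ℝ) T → t₂ ∈ Set.Icc (0:ℝ) T →
      IntervalIntegrable f volume t₁ t₂ := by
    intro t₁ t₂ h1 h2
    have huIcc : Set.uIcc t₁ t₂ ⊆ Set.Icc (0:ℝ) T := by
      rw [← Set.uIcc_of_le hT.le]; exact Set.uIcc_subset_uIcc
        (by rw [Set.uIcc_of_le hT.le]; exact h1) (by rw [Set.uIcc_of_le hT.le]; exact h2)
    have : IntervalIntegrable (∑ a, fun t => p t a * r t a) volume t₁ t₂ := by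
      refine IntervalIntegrable.sum _ fun a _ => ?_
      exact (hsub a t₁ t₂ h1 h2).continuousOn_mul ((hpcont a).mono huIcc)
    refine this.congr ?_
    intro t _
    simp [hfdef]
  -- the one-step bound
  have hstep : ∀ (t₁ t₂ : ℝ), t₁ ∈ Set.Icc (0:ℝ) T → t₂ ∈ Set.Icc (0:ℝ) T → t₁ ≤ t₂ →
      β⁻¹ * (Real.log (S t₂) - Real.log (S t₁)) ≤
        (∫ t in t₁..t₂, f t) + (Real.exp (β * (t₂ - t₁)) - 1) * (t₂ - t₁) := by
    intro t₁ t₂ h1 h2 h12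
    -- Jensen / convexity step
    have hjensen : Real.log (S t₂) - Real.log (S t₁) ≤
        β * ∑ a, p t₂ a * (s t₂ a - s t₁ a) := by
      have hconv : ConvexOn ℝ Set.univ Real.exp := convexOn_exp
      have hJ := hconv.map_sum_le (t := Finset.univ)
        (w := fun a => p t₂ a) (p := fun a => β * (s t₁ a - s t₂ a))
        (fun a _ => hp_nonneg t₂ a) (hpsum t₂) (fun a _ => Set.mem_univ _)
      have hRHS : ∑ a, p t₂ a • Real.exp (β * (s t₁ a - s t₂ a)) = S t₁ / S t₂ := by
        rw [hSdef, Finset.sum_div]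
        refine Finset.sum_congr rfl fun a _ => ?_
        rw [smul_eq_mul, hp t₂ a, mul_sub, Real.exp_sub]
        field_simp
      rw [hRHS] at hJ
      have hlog : ∑ a, p t₂ a • (β * (s t₁ a - s t₂ a)) ≤ Real.log (S t₁ / S t₂) :=
        (Real.le_log_iff_exp_le (div_pos (hSpos t₁) (hSpos t₂))).2 hJ
      rw [Real.log_div (hSpos t₁).ne' (hSpos t₂).ne'] at hlog
      have hsum : ∑ a, p t₂ a • (β * (s t₁ a - s t₂ a)) =
          -(β * ∑ a, p t₂ a * (s t₂ a - s t₁ a)) := by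
        rw [Finset.mul_sum, ← Finset.sum_neg_distrib]
        refine Finset.sum_congr rfl fun a _ => ?_
        simp [smul_eq_mul]; ring
      rw [hsum] at hlog
      linarith
    -- rewrite as an integral
    have hrint : ∑ a, p t₂ a * (s t₂ a - s t₁ a) =
        ∫ t in t₁..t₂, ∑ a, p t₂ a * r t a := by
      rw [intervalIntegral.integral_finset_sum (fun a _ =>
        ((hsub a t₁ t₂ h1 h2).const_mul (p t₂ a)))]
      refine Finset.sum_congr rfl fun a _ => ?_
      rw [hsdiff a t₁ t₂ h1 h2, intervalIntegral.integral_const_mul]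
    -- pointwise comparison with f
    have hpt : ∀ t ∈ Set.Icc t₁ t₂,
        ∑ a, p t₂ a * r t a ≤ f t + (Real.exp (β * (t₂ - t₁)) - 1) := by
      intro t ht
      have htIcc : t ∈ Set.Icc (0:ℝ) T := ⟨le_trans h1.1 ht.1, le_trans ht.2 h2.2⟩
      have hcomp : ∀ a, p t₂ a ≤ Real.exp (β * (t₂ - t₁)) * p t a := by
        intro a
        have hnum : Real.exp (β * s t₂ a) ≤
            Real.exp (β * (t₂ - t₁)) * Real.exp (β * s t a) := by
          rw [← Real.exp_add]
          apply Real.exp_le_exp.2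
          have := hslip a t t₂ htIcc h2 ht.2
          nlinarith [hβ.le, ht.1]
        have hden : S t ≤ S t₂ :=
          Finset.sum_le_sum fun c _ => Real.exp_le_exp.2
            (by nlinarith [hsmono c t t₂ htIcc h2 ht.2, hβ.le])
        rw [hp t₂ a, hp t a]
        have hdd : Real.exp (β * s t₂ a) / S t₂ ≤
            (Real.exp (β * (t₂ - t₁)) * Real.exp (β * s t a)) / S t :=
          div_le_div₀ (by positivity) hnum (hSpos t) hden
        calc Real.exp (β * s t₂ a) / S t₂
            ≤ (Real.exp (β * (t₂ - t₁)) * Real.exp (β * s t a)) / S t := hdd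
          _ = Real.exp (β * (t₂ - t₁)) * (Real.exp (β * s t a) / S t) := by ring
      have hterm : ∀ a, p t₂ a * r t a ≤
          p t a * r t a + (Real.exp (β * (t₂ - t₁)) - 1) * p t a := by
        intro a
        have hr := hr_range t htIcc a
        have he1 : (1:ℝ) ≤ Real.exp (β * (t₂ - t₁)) := by
          rw [← Real.exp_zero]
          apply Real.exp_le_exp.2
          nlinarith [hβ.le]
        calc p t₂ a * r t a ≤ Real.exp (β * (t₂ - t₁)) * p t a * r t a := by
              apply mul_le_mul_of_nonneg_right (hcomp a) hr.1
          _ = p t a * r t a + (Real.exp (β * (t₂ - t₁)) - 1) * (p t a * r t a) := by ring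
          _ ≤ p t a * r t a + (Real.exp (β * (t₂ - t₁)) - 1) * p t a := by
              have : p t a * r t a ≤ p t a := by
                nlinarith [hp_nonneg t a, hr.2]
              nlinarith [this, he1]
      calc ∑ a, p t₂ a * r t a
          ≤ ∑ a, (p t a * r t a + (Real.exp (β * (t₂ - t₁)) - 1) * p t a) :=
            Finset.sum_le_sum fun a _ => hterm a
        _ = f t + (Real.exp (β * (t₂ - t₁)) - 1) := by
            rw [Finset.sum_add_distrib, ← Finset.mul_sum, hpsum]
            simp [hfdef]
    -- integrate the pointwise comparison
    have hint1 : IntervalIntegrable (fun t => ∑ a, p t₂ a * r t a) volume t₁ t₂ := by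
      have : IntervalIntegrable (∑ a, fun t => p t₂ a * r t a) volume t₁ t₂ :=
        IntervalIntegrable.sum _ fun a _ => (hsub a t₁ t₂ h1 h2).const_mul _
      refine this.congr ?_
      intro t _; simp
    have hint2 : IntervalIntegrable
        (fun t => f t + (Real.exp (β * (t₂ - t₁)) - 1)) volume t₁ t₂ :=
      (hfint t₁ t₂ h1 h2).add intervalIntegrable_const
    have hmono := intervalIntegral.integral_mono_on h12 hint1 hint2 hpt
    have hconstint : (∫ t in t₁..t₂, (f t + (Real.exp (β * (t₂ - t₁)) - 1))) =
        (∫ t in t₁..t₂, f t) + (Real.exp (β * (t₂ - t₁)) - 1) * (t₂ - t₁) := by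
      rw [intervalIntegral.integral_add (hfint t₁ t₂ h1 h2) intervalIntegrable_const]
      simp
      ring
    have hfinal : β * ∑ a, p t₂ a * (s t₂ a - s t₁ a) ≤
        β * ((∫ t in t₁..t₂, f t) + (Real.exp (β * (t₂ - t₁)) - 1) * (t₂ - t₁)) := by
      apply mul_le_mul_of_nonneg_left _ hβ.le
      rw [hrint]
      calc (∫ t in t₁..t₂, ∑ a, p t₂ a * r t a)
          ≤ ∫ t in t₁..t₂, (f t + (Real.exp (β * (t₂ - t₁)) - 1)) := hmono
        _ = _ := hconstint
    have := le_trans hjensen (by linarith [hfinal] :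
      β * ∑ a, p t₂ a * (s t₂ a - s t₁ a) ≤
        β * ((∫ t in t₁..t₂, f t) + (Real.exp (β * (t₂ - t₁)) - 1) * (t₂ - t₁)))
    calc β⁻¹ * (Real.log (S t₂) - Real.log (S t₁))
        ≤ β⁻¹ * (β * ((∫ t in t₁..t₂, f t) +
            (Real.exp (β * (t₂ - t₁)) - 1) * (t₂ - t₁))) := by
          apply mul_le_mul_of_nonneg_left this (inv_nonneg.2 hβ.le)
      _ = _ := by field_simp
  -- telescoping over a uniform partition
  have hnstep : ∀ n : ℕ, 1 ≤ n →
      β⁻¹ * (Real.log (S T) - Real.log (S 0)) ≤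
        (∫ t in (0:ℝ)..T, f t) + (Real.exp (β * (T / n)) - 1) * T := by
    intro n hn
    have hn0 : (0:ℝ) < n := by exact_mod_cast hn
    set u : ℝ := T / n with hu
    have hu0 : 0 < u := div_pos hT hn0
    set a : ℕ → ℝ := fun k => k * u with ha
    have haIcc : ∀ k : ℕ, k ≤ n → a k ∈ Set.Icc (0:ℝ) T := by
      intro k hk
      constructor
      · positivity
      · have : (k:ℝ) ≤ n := by exact_mod_cast hk
        calc (k:ℝ) * u ≤ n * u := by nlinarith
          _ = T := by rw [hu]; field_simp
    have ha0 : a 0 = 0 := by simp [ha]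
    have han : a n = T := by show (n:ℝ) * u = T; rw [hu]; field_simp
    have htel : β⁻¹ * (Real.log (S T) - Real.log (S 0)) =
        ∑ k ∈ Finset.range n,
          (β⁻¹ * Real.log (S (a (k+1))) - β⁻¹ * Real.log (S (a k))) := by
      rw [Finset.sum_range_sub (fun k => β⁻¹ * Real.log (S (a k)))]
      rw [ha0, han]; ring
    have hdiffu : ∀ k : ℕ, a (k+1) - a k = u := by
      intro k; simp [ha]; ring
    have hbound : ∀ k ∈ Finset.range n,
        β⁻¹ * Real.log (S (a (k+1))) - β⁻¹ * Real.log (S (a k)) ≤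
          (∫ t in a k..a (k+1), f t) + (Real.exp (β * u) - 1) * u := by
      intro k hk
      rw [Finset.mem_range] at hk
      have h1 := haIcc k (le_of_lt hk)
      have h2 := haIcc (k+1) hk
      have h12 : a k ≤ a (k+1) := by
        have := hdiffu k; linarith
      have := hstep (a k) (a (k+1)) h1 h2 h12
      rw [hdiffu k] at this
      calc β⁻¹ * Real.log (S (a (k+1))) - β⁻¹ * Real.log (S (a k))
          = β⁻¹ * (Real.log (S (a (k+1))) - Real.log (S (a k))) := by ring
        _ ≤ _ := this
    have hsumint : ∑ k ∈ Finset.range n, (∫ t in a k..a (k+1), f t) =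
        ∫ t in (0:ℝ)..T, f t := by
      rw [intervalIntegral.sum_integral_adjacent_intervals
        (fun k hk => hfint (a k) (a (k+1)) (haIcc k (le_of_lt hk)) (haIcc (k+1) hk))]
      rw [ha0, han]
    calc β⁻¹ * (Real.log (S T) - Real.log (S 0))
        = ∑ k ∈ Finset.range n,
          (β⁻¹ * Real.log (S (a (k+1))) - β⁻¹ * Real.log (S (a k))) := htel
      _ ≤ ∑ k ∈ Finset.range n,
          ((∫ t in a k..a (k+1), f t) + (Real.exp (β * u) - 1) * u) :=
          Finset.sum_le_sum hbound
      _ = (∫ t in (0:ℝ)..T, f t) + n * ((Real.exp (β * u) - 1) * u) := by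
          rw [Finset.sum_add_distrib, hsumint, Finset.sum_const, Finset.card_range,
            nsmul_eq_mul]
      _ = (∫ t in (0:ℝ)..T, f t) + (Real.exp (β * u) - 1) * T := by
          have hnu : (n:ℝ) * u = T := by rw [hu]; field_simp
          rw [← hnu]
          ring
  -- take the limit n → ∞
  have hmain : β⁻¹ * (Real.log (S T) - Real.log (S 0)) ≤ ∫ t in (0:ℝ)..T, f t := by
    have htend : Tendsto (fun n : ℕ => (Real.exp (β * (T / n)) - 1) * T)
        atTop (nhds 0) := by
      have h1 : Tendsto (fun n : ℕ => T / (n:ℝ)) atTop (nhds 0) :=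
        tendsto_const_div_atTop_nhds_zero_nat T
      have h2 : Tendsto (fun n : ℕ => β * (T / n)) atTop (nhds (β * 0)) :=
        h1.const_mul β
      rw [mul_zero] at h2
      have h3 : Tendsto (fun n : ℕ => Real.exp (β * (T / n))) atTop (nhds 1) := by
        have := Real.continuous_exp.continuousAt (x := (0:ℝ))
        rw [← Real.exp_zero]
        exact (Real.continuous_exp.tendsto 0).comp h2
      have h4 : Tendsto (fun n : ℕ => Real.exp (β * (T / n)) - 1) atTop (nhds 0) := by
        have := h3.sub_const 1
        simpa using this
      have := h4.mul_const T
      simpa using this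
    have hev : ∀ᶠ n : ℕ in atTop,
        β⁻¹ * (Real.log (S T) - Real.log (S 0)) - (∫ t in (0:ℝ)..T, f t) ≤
          (Real.exp (β * (T / n)) - 1) * T := by
      filter_upwards [Filter.eventually_ge_atTop 1] with n hn
      linarith [hnstep n hn]
    have := ge_of_tendsto htend hev
    linarith
  -- compute S 0 and bound x ⬝ s T
  have hS0 : Real.log (S 0) = Real.log d := by
    have hs0 : ∀ a, s 0 a = 0 := fun a => by rw [hs]; simp
    have : S 0 = d := by
      rw [hSdef]
      simp only [hs0, mul_zero, Real.exp_zero]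
      simp
    rw [this]
  have hxs : ∑ a, x a * s T a ≤ β⁻¹ * Real.log (S T) := by
    have hsle : ∀ a, s T a ≤ β⁻¹ * Real.log (S T) := by
      intro a
      have h1 : Real.exp (β * s T a) ≤ S T := by
        show Real.exp (β * s T a) ≤ ∑ c, Real.exp (β * s T c)
        exact Finset.single_le_sum (fun c _ => (Real.exp_pos (β * s T c)).le)
          (Finset.mem_univ a)
      have h2 : β * s T a ≤ Real.log (S T) :=
        (Real.le_log_iff_exp_le (hSpos T)).2 h1
      calc s T a = β⁻¹ * (β * s T a) := by field_simp
        _ ≤ β⁻¹ * Real.log (S T) :=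
          mul_le_mul_of_nonneg_left h2 (inv_nonneg.2 hβ.le)
    calc ∑ a, x a * s T a ≤ ∑ a, x a * (β⁻¹ * Real.log (S T)) :=
          Finset.sum_le_sum fun a _ => mul_le_mul_of_nonneg_left (hsle a) (hx.1 a)
      _ = (∑ a, x a) * (β⁻¹ * Real.log (S T)) := by rw [Finset.sum_mul]
      _ = β⁻¹ * Real.log (S T) := by rw [hx.2]; ring
  have hgoal : (∫ t in (0:ℝ)..T, ∑ a, p t a * r t a) = ∫ t in (0:ℝ)..T, f t := rfl
  rw [hgoal]
  calc (∑ a, x a * s T a) - (∫ t in (0:ℝ)..T, f t)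
      ≤ β⁻¹ * Real.log (S T) - (∫ t in (0:ℝ)..T, f t) := by linarith [hxs]
    _ ≤ β⁻¹ * Real.log (S 0) := by linarith [hmain]
    _ = β⁻¹ * Real.log d := by rw [hS0]
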